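/- Let k ≥ 1 be an integer and let l, s ≥ 0 be integers. Then |{𝐢 ∈ [k]^s : |range(𝐢)| ≥ k − l}| ≤ k^s · e^{s/k} · (l + 1)/(k + 1); that is, the probability that s independent uniform samples from a set of size k contain at least k − l distinct values is at most e^{s/k}·(l+1)/(k+1). -/

import Mathlib

open Finset

lemma many_distinct_key (k l s : ℕ) :
    (Finset.univ.filter (fun i : Fin s → Fin k =>
        k - l ≤ (Finset.image i Finset.univ).card)).card * (k + 1)
      ≤ (l + 1) * (k + 1) ^ s := by
  classical
  set A : Finset (Fin s → Fin k) :=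
    Finset.univ.filter (fun i : Fin s → Fin k =>
        k - l ≤ (Finset.image i Finset.univ).card) with hA
  set Φ : (Fin s → Fin k) × Fin (k + 1) → (Fin s → Fin (k + 1)) :=
    fun p x => Equiv.swap p.2 (Fin.last k) ((p.1 x).castSucc) with hΦ
  have key : (A ×ˢ (Finset.univ : Finset (Fin (k+1)))).card ≤ (l + 1) * (k + 1) ^ s := by
    have hfib : ∀ j ∈ (A ×ˢ (Finset.univ : Finset (Fin (k+1)))).image Φ,
        ((A ×ˢ (Finset.univ : Finset (Fin (k+1)))).filter fun p => Φ p = j).card ≤ l + 1 := by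
      intro j _
      set F := (A ×ˢ (Finset.univ : Finset (Fin (k+1)))).filter fun p => Φ p = j with hF
      rcases F.eq_empty_or_nonempty with he | ⟨⟨i0, c0⟩, h0⟩
      · simp [he]
      · rw [hF, mem_filter, mem_product] at h0
        obtain ⟨⟨hi0A, -⟩, hΦ0⟩ := h0
        -- range of j has same card as range of i0
        have hg : Function.Injective
            (fun a : Fin k => Equiv.swap c0 (Fin.last k) a.castSucc) := by
          intro a b hab
          exact Fin.castSucc_injective k ((Equiv.swap c0 (Fin.last k)).injective hab)
        have hjimg : (Finset.image j Finset.univ).card = (Finset.image i0 Finset.univ).card := by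
          have : Finset.image j Finset.univ =
              Finset.image (fun a : Fin k => Equiv.swap c0 (Fin.last k) a.castSucc)
                (Finset.image i0 Finset.univ) := by
            rw [Finset.image_image, ← hΦ0]
            rfl
          rw [this, Finset.card_image_of_injective _ hg]
        have hi0 : k - l ≤ (Finset.image i0 Finset.univ).card := by
          rw [hA, mem_filter] at hi0A; exact hi0A.2
        -- F injects into complement of the range of j
        have hinj : F.card ≤ ((Finset.image j Finset.univ)ᶜ).card := by
          apply Finset.card_le_card_of_injOn (fun p => p.2)
          · intro ⟨i, c⟩ hp
            rw [hF, Finset.mem_coe, mem_filter] at hp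
            obtain ⟨-, hpj⟩ := hp
            rw [Finset.mem_coe, Finset.mem_compl, Finset.mem_image]
            rintro ⟨x, -, hx⟩
            have h1 := congrFun hpj x
            rw [hx] at h1
            simp only [hΦ] at h1
            have h2 := congrArg (Equiv.swap c (Fin.last k)) h1
            simp only [Equiv.swap_apply_self, Equiv.swap_apply_left] at h2
            exact absurd h2 (Fin.ne_last_of_lt (Fin.castSucc_lt_last _))
          · rintro ⟨i, c⟩ hp ⟨i', c'⟩ hp' hcc
            simp only at hcc
            simp only [Finset.mem_coe] at hp hp'
            rw [hF, Finset.mem_filter] at hp hp'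
            subst hcc
            have hii' : i = i' := by
              funext x
              have h1 := congrFun hp.2 x
              have h2 := congrFun hp'.2 x
              rw [← h2] at h1
              exact Fin.castSucc_injective k ((Equiv.swap c (Fin.last k)).injective h1)
            rw [hii']
        have hcompl : ((Finset.image j Finset.univ)ᶜ).card
            = (k + 1) - (Finset.image j Finset.univ).card := by
          rw [Finset.card_compl]
          simp
        have hle : (Finset.image i0 Finset.univ).card ≤ k := by
          simpa using (Finset.card_le_card (Finset.subset_univ (Finset.image i0 Finset.univ)))
        omega
    calc (A ×ˢ (Finset.univ : Finset (Fin (k+1)))).card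
        ≤ (l + 1) * ((A ×ˢ (Finset.univ : Finset (Fin (k+1)))).image Φ).card :=
          Finset.card_le_mul_card_image _ _ hfib
      _ ≤ (l + 1) * (k + 1) ^ s := by
          apply Nat.mul_le_mul_left
          calc ((A ×ˢ (Finset.univ : Finset (Fin (k+1)))).image Φ).card
              ≤ Fintype.card (Fin s → Fin (k + 1)) :=
                (Finset.card_le_card (Finset.subset_univ _)).trans_eq (by simp)
            _ = (k + 1) ^ s := by simp
  calc A.card * (k + 1)
      = (A ×ˢ (Finset.univ : Finset (Fin (k+1)))).card := by
        rw [Finset.card_product]; simp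
    _ ≤ (l + 1) * (k + 1) ^ s := key

/-- The probability that `s` uniform samples from a set of size `k` contain at
least `k − l` distinct values is at most `e^{s/k}·(l+1)/(k+1)`. -/
theorem many_distinct_values_bound (k : ℕ) (hk : 1 ≤ k) (l s : ℕ) :
    ((Finset.univ.filter (fun i : Fin s → Fin k =>
        k - l ≤ (Finset.image i Finset.univ).card)).card : ℝ)
      ≤ (k : ℝ) ^ s * Real.exp ((s : ℝ) / (k : ℝ)) * ((l : ℝ) + 1) / ((k : ℝ) + 1) := by
  have hkey := many_distinct_key k l s
  have hk0 : (0:ℝ) < k := by exact_mod_cast hk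
  have hk1 : (0:ℝ) < (k:ℝ) + 1 := by positivity
  have hcast : ((Finset.univ.filter (fun i : Fin s → Fin k =>
      k - l ≤ (Finset.image i Finset.univ).card)).card : ℝ) * ((k:ℝ) + 1)
      ≤ ((l:ℝ) + 1) * ((k:ℝ) + 1) ^ s := by
    exact_mod_cast hkey
  rw [div_eq_mul_inv, ← div_eq_mul_inv, le_div_iff₀ hk1]
  calc ((Finset.univ.filter (fun i : Fin s → Fin k =>
      k - l ≤ (Finset.image i Finset.univ).card)).card : ℝ) * ((k:ℝ) + 1)
      ≤ ((l:ℝ) + 1) * ((k:ℝ) + 1) ^ s := hcast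
    _ ≤ ((l:ℝ) + 1) * ((k:ℝ) ^ s * Real.exp ((s : ℝ) / (k : ℝ))) := by
        apply mul_le_mul_of_nonneg_left _ (by positivity)
        have h1 : (k:ℝ) + 1 ≤ (k:ℝ) * Real.exp (1 / (k:ℝ)) := by
          have := Real.add_one_le_exp (1 / (k:ℝ))
          calc (k:ℝ) + 1 = (k:ℝ) * (1 / (k:ℝ) + 1) := by field_simp; ring
            _ ≤ (k:ℝ) * Real.exp (1 / (k:ℝ)) := by
                exact mul_le_mul_of_nonneg_left this hk0.le
        calc ((k:ℝ) + 1) ^ s ≤ ((k:ℝ) * Real.exp (1 / (k:ℝ))) ^ s :=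
              pow_le_pow_left₀ (by positivity) h1 s
          _ = (k:ℝ) ^ s * Real.exp ((s : ℝ) / (k : ℝ)) := by
              rw [mul_pow, ← Real.exp_nat_mul]
              ring_nf
    _ = (k : ℝ) ^ s * Real.exp ((s : ℝ) / (k : ℝ)) * ((l : ℝ) + 1) := by ring
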